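/- Let I = (a,b) ⊂ ℝ, E a Banach space, α : I → E continuous with right derivative ∂_s⁺α(s) = 0 for all s ∈ I, and suppose α(t) = 0 for some t ∈ I. Then α ≡ 0 on [t, b). -/

import Mathlib

open Filter Topology

theorem vanishing_right_derivative_implies_zero
    {E : Type*} [NormedAddCommGroup E] [NormedSpace ℝ E]
    (a b : ℝ) (α : ℝ → E) (hα : ContinuousOn α (Set.Ioo a b))
    (hd : ∀ s ∈ Set.Ioo a b, Tendsto (fun σ : ℝ => σ⁻¹ • (α (s + σ) - α s))
        (𝓝[>] (0:ℝ)) (𝓝 (0:E)))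
    (t : ℝ) (ht : t ∈ Set.Ioo a b) (hαt : α t = 0) :
    ∀ s ∈ Set.Ico t b, α s = 0 := by
  intro s hs
  rcases eq_or_lt_of_le hs.1 with rfl | hts
  · exact hαt
  have hsub : Set.Icc t s ⊆ Set.Ioo a b := fun y hy =>
    ⟨lt_of_lt_of_le ht.1 hy.1, lt_of_le_of_lt hy.2 hs.2⟩
  have key := constant_of_has_deriv_right_zero (f := α) (a := t) (b := s)
    (hα.mono hsub) ?_ s (Set.right_mem_Icc.2 hs.1)
  · rw [key, hαt]
  · intro x hx
    have hx' : x ∈ Set.Ioo a b := hsub ⟨hx.1, le_of_lt hx.2⟩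
    rw [hasDerivWithinAt_iff_tendsto_slope]
    have hIci : Set.Ici x \ {x} = Set.Ioi x := Set.Ici_sdiff_left
    rw [hIci]
    have htr : Tendsto (fun y => y - x) (𝓝[>] x) (𝓝[>] (0:ℝ)) := by
      apply tendsto_nhdsWithin_of_tendsto_nhds_of_eventually_within
      · have : Tendsto (fun y => y - x) (𝓝 x) (𝓝 (x - x)) :=
          (continuous_id.sub continuous_const).tendsto x
        simpa using this.mono_left nhdsWithin_le_nhds
      · filter_upwards [self_mem_nhdsWithin] with y hy
        exact sub_pos.2 (Set.mem_Ioi.1 hy)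
    exact ((hd x hx').comp htr).congr fun y => by
      simp [Function.comp, slope_def_module]
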